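/- For the period-doubling word S, the Abelian complexity is O(log n): there is a constant C such that ρ^{(1)}_S(n) ≤ C·log(n+1) for all n ≥ 1. Moreover ρ^{(1)}_S(n) ≥ 2 for all n ≥ 1, so the lower Abelian complexity min_{m ≥ n} ρ^{(1)}_S(m) equals 2 for all n. -/

import Mathlib

/-- Number of occurrences of `x` as a factor of `u`. -/
def occ {α : Type*} [DecidableEq α] (u x : List α) : ℕ :=
  ((List.range (u.length + 1)).filter (fun i => decide (x <+: u.drop i))).length

/-- `k`-Abelian equivalence: same number of occurrences of every word of length at most `k`. -/
def KAbEq {α : Type*} [DecidableEq α] (k : ℕ) (u v : List α) : Prop :=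
  ∀ x : List α, x.length ≤ k → occ u x = occ v x

/-- The factor of the infinite word `w` of length `n` starting at position `i`. -/
def factorAt {α : Type*} (w : ℕ → α) (i n : ℕ) : List α :=
  (List.range n).map (fun j => w (i + j))

/-- `k`-Abelian complexity: the number of `k`-Abelian classes of length-`n` factors of `w`. -/
noncomputable def rho {α : Type*} [DecidableEq α] (k : ℕ) (w : ℕ → α) (n : ℕ) : ℕ :=
  Set.ncard { C : Set (List α) | ∃ i : ℕ,
    C = { v | (∃ j : ℕ, v = factorAt w j n) ∧ KAbEq k v (factorAt w i n) } }

/-! ### Auxiliary lemmas about `occ` -/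

lemma occ_nil {α : Type*} [DecidableEq α] (u : List α) : occ u [] = u.length + 1 := by
  have : ∀ i ∈ List.range (u.length + 1),
      (fun i => decide (([] : List α) <+: u.drop i)) i = true := by
    intro i _; simp [List.nil_prefix]
  rw [occ, List.filter_eq_self.2 this, List.length_range]

lemma singleton_prefix {α : Type*} (a : α) (l : List α) : [a] <+: l ↔ l.head? = some a := by
  cases l with
  | nil => simp
  | cons b t => simp [List.cons_prefix_cons, eq_comm]

lemma occ_singleton {α : Type*} [DecidableEq α] (u : List α) (a : α) :
    occ u [a] = u.count a := by
  induction u with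
  | nil => simp [occ]
  | cons b t ih =>
    have hpred : ∀ i ∈ List.range ((b :: t).length + 1),
        (fun i => decide ([a] <+: (b :: t).drop i)) i
          = (fun i => decide ((b :: t)[i]? = some a)) i := by
      intro i _
      simp only [decide_eq_decide, singleton_prefix, List.head?_drop]
    have hpred' : ∀ i ∈ List.range (t.length + 1),
        (fun i => decide ([a] <+: t.drop i)) i
          = (fun i => decide (t[i]? = some a)) i := by
      intro i _
      simp only [decide_eq_decide, singleton_prefix, List.head?_drop]
    rw [occ, List.filter_congr hpred]
    rw [occ, List.filter_congr hpred'] at ih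
    have hlen : (b :: t).length + 1 = t.length + 1 + 1 := by simp
    rw [hlen, List.range_succ_eq_map]
    rw [List.filter_cons, List.filter_map]
    have hcomp : ((fun i => decide ((b :: t)[i]? = some a)) ∘ Nat.succ)
        = fun i => decide (t[i]? = some a) := by
      funext i; simp
    rw [hcomp]
    simp only [List.getElem?_cons_zero, List.count_cons]
    by_cases hba : b = a
    · simp [hba, ih]
    · have : decide (some b = some a) = false := by simp [hba]
      simp [this, ih, hba]

lemma count_false_add_count_true (u : List Bool) :
    u.count false + u.count true = u.length := by
  induction u with
  | nil => simp
  | cons b t ih => cases b <;> simp [List.count_cons] <;> omega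

lemma kabeq_iff (u v : List Bool) :
    KAbEq 1 u v ↔ (u.length = v.length ∧ u.count true = v.count true) := by
  constructor
  · intro h
    constructor
    · have := h [] (by simp)
      rw [occ_nil, occ_nil] at this; omega
    · have := h [true] (by simp)
      rwa [occ_singleton, occ_singleton] at this
  · rintro ⟨hlen, hcount⟩ x hx
    match x with
    | [] => rw [occ_nil, occ_nil, hlen]
    | [a] =>
      rw [occ_singleton, occ_singleton]
      cases a
      · have h1 := count_false_add_count_true u
        have h2 := count_false_add_count_true v
        omega
      · exact hcount
    | a :: b :: t => simp at hx

/-! ### The ones-count function and its recursions -/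

/-- Number of `true`s in the factor of length `n` at position `i`. -/
def cnt (S : ℕ → Bool) (i n : ℕ) : ℕ := (factorAt S i n).count true

lemma factorAt_length {α : Type*} (w : ℕ → α) (i n : ℕ) : (factorAt w i n).length = n := by
  simp [factorAt]

lemma cnt_zero (S : ℕ → Bool) (i : ℕ) : cnt S i 0 = 0 := by simp [cnt, factorAt]

lemma cnt_succ (S : ℕ → Bool) (i n : ℕ) :
    cnt S i (n + 1) = cnt S i n + (S (i + n)).toNat := by
  have : factorAt S i (n + 1) = factorAt S i n ++ [S (i + n)] := by
    simp [factorAt, List.range_succ]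
  rw [cnt, this, List.count_append, cnt]
  congr 1
  cases S (i + n) <;> simp

lemma cnt_le (S : ℕ → Bool) (i n : ℕ) : cnt S i n ≤ n := by
  induction n with
  | zero => simp [cnt_zero]
  | succ n ih =>
    rw [cnt_succ]
    have : (S (i + n)).toNat ≤ 1 := by cases S (i + n) <;> simp
    omega

lemma cnt_add (S : ℕ → Bool) (i n : ℕ) :
    cnt S 0 (i + n) = cnt S 0 i + cnt S i n := by
  induction n with
  | zero => simp [cnt_zero]
  | succ n ih =>
    have h1 : i + (n + 1) = (i + n) + 1 := by omega
    rw [h1, cnt_succ, cnt_succ, ih]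
    have : 0 + (i + n) = i + n := by omega
    rw [this]; omega

section PD

variable (S : ℕ → Bool) (hS0 : ∀ n, S (2 * n) = false) (hS1 : ∀ n, S (2 * n + 1) = !S n)

include hS0 hS1 in
lemma pd_doubling : ∀ k, cnt S 0 (2 * k) + cnt S 0 k = k ∧ cnt S 0 (2 * k + 1) = cnt S 0 (2 * k) := by
  intro k
  induction k with
  | zero =>
    constructor
    · simp [cnt_zero]
    · have h1 : (1 : ℕ) = 0 + 1 := rfl
      have : cnt S 0 1 = cnt S 0 0 + (S 0).toNat := by
        rw [show (1:ℕ) = 0 + 1 from rfl, cnt_succ]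
      have h0 : S 0 = false := by have := hS0 0; simpa using this
      simp [cnt_zero, this, h0]
  | succ k ih =>
    obtain ⟨ih1, ih2⟩ := ih
    have e1 : cnt S 0 (2 * (k + 1)) = cnt S 0 (2 * k + 1) + (S (2 * k + 1)).toNat := by
      rw [show 2 * (k + 1) = (2 * k + 1) + 1 by omega, cnt_succ]
      simp
    have e2 : cnt S 0 (2 * (k + 1) + 1) = cnt S 0 (2 * (k + 1)) + (S (2 * (k + 1))).toNat := by
      rw [cnt_succ]; simp
    have e3 : cnt S 0 (k + 1) = cnt S 0 k + (S k).toNat := by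
      rw [cnt_succ]; simp
    have h1 : S (2 * k + 1) = !S k := hS1 k
    have h2 : S (2 * (k + 1)) = false := hS0 (k + 1)
    have h3 : (S k).toNat + (!S k).toNat = 1 := by cases S k <;> rfl
    rw [h1] at e1; rw [h2] at e2
    constructor
    · omega
    · simp at e2; omega

include hS0 hS1 in
lemma pd_even (i n : ℕ) (j : ℕ) (hj : j = 2 * i ∨ j = 2 * i + 1) :
    cnt S j (2 * n) + cnt S i n = n := by
  have d1 := pd_doubling S hS0 hS1 i
  have d2 := pd_doubling S hS0 hS1 (i + n)
  have a1 : cnt S 0 (i + n) = cnt S 0 i + cnt S i n := cnt_add S i n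
  rcases hj with rfl | rfl
  · have a2 : cnt S 0 (2 * i + 2 * n) = cnt S 0 (2 * i) + cnt S (2 * i) (2 * n) :=
      cnt_add S (2 * i) (2 * n)
    rw [show 2 * i + 2 * n = 2 * (i + n) by omega] at a2
    omega
  · have a2 : cnt S 0 ((2 * i + 1) + 2 * n) = cnt S 0 (2 * i + 1) + cnt S (2 * i + 1) (2 * n) :=
      cnt_add S (2 * i + 1) (2 * n)
    rw [show (2 * i + 1) + 2 * n = 2 * (i + n) + 1 by omega] at a2
    omega

include hS0 hS1 in
lemma pd_odd_even (i n : ℕ) : cnt S (2 * i) (2 * n + 1) + cnt S i n = n := by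
  have d1 := pd_doubling S hS0 hS1 i
  have d2 := pd_doubling S hS0 hS1 (i + n)
  have a1 : cnt S 0 (i + n) = cnt S 0 i + cnt S i n := cnt_add S i n
  have a2 : cnt S 0 (2 * i + (2 * n + 1)) = cnt S 0 (2 * i) + cnt S (2 * i) (2 * n + 1) :=
    cnt_add S (2 * i) (2 * n + 1)
  rw [show 2 * i + (2 * n + 1) = 2 * (i + n) + 1 by omega] at a2
  omega

include hS0 hS1 in
lemma pd_odd_odd (i n : ℕ) : cnt S (2 * i + 1) (2 * n + 1) + cnt S i (n + 1) = n + 1 := by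
  have d1 := pd_doubling S hS0 hS1 i
  have d2 := pd_doubling S hS0 hS1 (i + n + 1)
  have a1 : cnt S 0 (i + (n + 1)) = cnt S 0 i + cnt S i (n + 1) := cnt_add S i (n + 1)
  have a2 : cnt S 0 ((2 * i + 1) + (2 * n + 1)) = cnt S 0 (2 * i + 1) + cnt S (2 * i + 1) (2 * n + 1) :=
    cnt_add S (2 * i + 1) (2 * n + 1)
  rw [show (2 * i + 1) + (2 * n + 1) = 2 * (i + n + 1) by omega] at a2
  rw [show i + (n + 1) = i + n + 1 by omega] at a1
  omega

lemma cnt_one (S : ℕ → Bool) (i : ℕ) : cnt S i 1 = (S i).toNat := by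
  rw [show (1:ℕ) = 0 + 1 from rfl, cnt_succ, cnt_zero]
  simp

include hS0 hS1 in
/-- The bounds lemma: the values of `cnt S · n` lie in an interval of length `log₂ n + 1`. -/
lemma pd_bounds : ∀ n, ∃ a b : ℕ, b ≤ a + Nat.log 2 n + 1 ∧ b ≤ n ∧
    ∀ i, a ≤ cnt S i n ∧ cnt S i n ≤ b := by
  intro n
  induction n using Nat.strong_induction_on with
  | _ n ih =>
  match n, ih with
  | 0, _ => exact ⟨0, 0, by omega, by omega, fun i => by simp [cnt_zero]⟩
  | 1, _ =>
    refine ⟨0, 1, by omega, by omega, fun i => ?_⟩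
    rw [cnt_one]
    cases S i <;> simp
  | (n + 2), ih =>
    rcases Nat.even_or_odd (n + 2) with he | ho
    · -- n + 2 = 2 * m
      obtain ⟨m, hm⟩ := he
      have hm' : n + 2 = 2 * m := by omega
      have hm1 : 1 ≤ m := by omega
      obtain ⟨a, b, hab, hbn, hb⟩ := ih m (by omega)
      refine ⟨m - b, m - a, ?_, by omega, fun j => ?_⟩
      · have hlog : Nat.log 2 (2 * m) = Nat.log 2 m + 1 := by
          rw [show 2 * m = m * 2 by omega]
          exact Nat.log_mul_base (by norm_num) (by omega)
        have ha0 := (hb 0).1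
        have hb0 := (hb 0).2
        rw [hm', hlog]; omega
      · have hj : j = 2 * (j / 2) ∨ j = 2 * (j / 2) + 1 := by omega
        have hk := pd_even S hS0 hS1 (j / 2) m j hj
        have := hb (j / 2)
        rw [hm']
        omega
    · -- n + 2 = 2 * m + 1
      obtain ⟨m, hm⟩ := ho
      have hm1 : 1 ≤ m := by omega
      obtain ⟨a, b, hab, hbn, hb⟩ := ih m (by omega)
      refine ⟨m - b, m + 1 - a, ?_, by omega, fun j => ?_⟩
      · have hlog : Nat.log 2 m + 1 ≤ Nat.log 2 (2 * m + 1) := by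
          have h1 : Nat.log 2 (2 * m) = Nat.log 2 m + 1 := by
            rw [show 2 * m = m * 2 by omega]
            exact Nat.log_mul_base (by norm_num) (by omega)
          have h2 : Nat.log 2 (2 * m) ≤ Nat.log 2 (2 * m + 1) :=
            Nat.log_mono_right (by omega)
          omega
        have ha0 := (hb 0).1
        have hb0 := (hb 0).2
        rw [hm]; omega
      · rw [hm]
        have hj : j = 2 * (j / 2) ∨ j = 2 * (j / 2) + 1 := by omega
        rcases hj with hj | hj
        · have hk := pd_odd_even S hS0 hS1 (j / 2) m
          rw [← hj] at hk
          have := hb (j / 2)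
          omega
        · have hk := pd_odd_odd S hS0 hS1 (j / 2) m
          rw [← hj] at hk
          have h1 : cnt S (j / 2) (m + 1) = cnt S (j / 2) m + (S (j / 2 + m)).toNat :=
            cnt_succ S (j / 2) m
          have h2 : (S (j / 2 + m)).toNat ≤ 1 := by cases S (j / 2 + m) <;> simp
          have := hb (j / 2)
          omega

include hS0 hS1 in
/-- At powers of two, the values of `cnt` take exactly two consecutive values. -/
lemma pd_pow2 : ∀ k, ∃ a : ℕ, a + 1 ≤ 2 ^ k ∧
    ∀ i, cnt S i (2 ^ k) = a ∨ cnt S i (2 ^ k) = a + 1 := by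
  intro k
  induction k with
  | zero =>
    refine ⟨0, by norm_num, fun i => ?_⟩
    rw [pow_zero, cnt_one]
    cases S i <;> simp
  | succ k ih =>
    obtain ⟨a, ha, hv⟩ := ih
    refine ⟨2 ^ k - (a + 1), by rw [pow_succ]; omega, fun j => ?_⟩
    have hj : j = 2 * (j / 2) ∨ j = 2 * (j / 2) + 1 := by omega
    have hk := pd_even S hS0 hS1 (j / 2) (2 ^ k) j hj
    rw [show 2 * 2 ^ k = 2 ^ (k + 1) by ring] at hk
    have := hv (j / 2)
    omega

include hS0 hS1 in
/-- The values of `cnt S · n` are not all equal, for `n ≥ 1`. -/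
lemma pd_distinct : ∀ n, 1 ≤ n → ∃ i j : ℕ, cnt S i n ≠ cnt S j n := by
  intro n
  induction n using Nat.strong_induction_on with
  | _ n ih =>
  match n, ih with
  | 0, _ => intro h; exact absurd h (by omega)
  | 1, _ =>
    intro _
    refine ⟨0, 1, ?_⟩
    rw [cnt_one, cnt_one]
    have h0 : S 0 = false := by have := hS0 0; simpa using this
    have h1 : S 1 = true := by have := hS1 0; rw [h0] at this; simpa using this
    rw [h0, h1]; simp
  | (n + 2), ih =>
    intro _
    rcases Nat.even_or_odd (n + 2) with he | ho
    · obtain ⟨m, hm⟩ := he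
      have hm' : n + 2 = 2 * m := by omega
      obtain ⟨i, j, hij⟩ := ih m (by omega) (by omega)
      refine ⟨2 * i, 2 * j, ?_⟩
      have k1 := pd_even S hS0 hS1 i m (2 * i) (Or.inl rfl)
      have k2 := pd_even S hS0 hS1 j m (2 * j) (Or.inl rfl)
      have b1 := cnt_le S i m
      have b2 := cnt_le S j m
      rw [hm']
      omega
    · obtain ⟨m, hm⟩ := ho
      obtain ⟨i, j, hij⟩ := ih m (by omega) (by omega)
      refine ⟨2 * i, 2 * j, ?_⟩
      have k1 := pd_odd_even S hS0 hS1 i m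
      have k2 := pd_odd_even S hS0 hS1 j m
      rw [hm]
      omega

end PD

/-! ### Identification of `rho 1` with the number of values of `cnt` -/

/-- The abelian class of factors with a given number of `true`s. -/
def classSet (S : ℕ → Bool) (n m : ℕ) : Set (List Bool) :=
  { v : List Bool | (∃ j : ℕ, v = factorAt S j n) ∧ v.count true = m }

lemma rho_eq_ncard (S : ℕ → Bool) (n : ℕ) :
    rho 1 S n = (Set.range fun i => cnt S i n).ncard := by
  have hclass : ∀ i : ℕ,
      { v : List Bool | (∃ j : ℕ, v = factorAt S j n) ∧ KAbEq 1 v (factorAt S i n) }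
      = { v : List Bool | (∃ j : ℕ, v = factorAt S j n) ∧ v.count true = cnt S i n } := by
    intro i
    ext v
    simp only [Set.mem_setOf_eq, and_congr_right_iff]
    rintro ⟨j, rfl⟩
    rw [kabeq_iff]
    simp [factorAt_length, cnt]
  have hclass' : ∀ i : ℕ,
      { v : List Bool | (∃ j : ℕ, v = factorAt S j n) ∧ KAbEq 1 v (factorAt S i n) }
      = classSet S n (cnt S i n) := hclass
  have himg : { C : Set (List Bool) | ∃ i : ℕ,
      C = { v | (∃ j : ℕ, v = factorAt S j n) ∧ KAbEq 1 v (factorAt S i n) } }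
      = classSet S n '' (Set.range fun i => cnt S i n) := by
    ext C
    constructor
    · rintro ⟨i, rfl⟩
      exact ⟨cnt S i n, ⟨i, rfl⟩, (hclass' i).symm⟩
    · rintro ⟨m, ⟨i, rfl⟩, rfl⟩
      exact ⟨i, (hclass' i).symm⟩
  rw [rho, himg, Set.ncard_image_of_injOn]
  rintro m ⟨i, hi⟩ m' ⟨i', hi'⟩ he
  simp only at hi hi'
  have h1 : factorAt S i n ∈ classSet S n m := ⟨⟨i, rfl⟩, by rw [← hi]; rfl⟩
  rw [he] at h1
  have h2 : (factorAt S i n).count true = m' := h1.2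
  rw [← hi, ← h2]
  rfl

lemma range_cnt_finite (S : ℕ → Bool) (n : ℕ) :
    (Set.range fun i => cnt S i n).Finite := by
  apply Set.Finite.subset (Set.finite_Icc 0 n)
  rintro x ⟨i, rfl⟩
  exact ⟨Nat.zero_le _, cnt_le S i n⟩

theorem stmt9 (S : ℕ → Bool)
    (hS0 : ∀ n, S (2 * n) = false) (hS1 : ∀ n, S (2 * n + 1) = !S n) :
    (∃ C : ℝ, ∀ n : ℕ, 1 ≤ n → (rho 1 S n : ℝ) ≤ C * Real.log (n + 1)) ∧
    (∀ n : ℕ, 1 ≤ n → 2 ≤ rho 1 S n) ∧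
    (∀ n : ℕ, 1 ≤ n → sInf { r : ℕ | ∃ m : ℕ, n ≤ m ∧ r = rho 1 S m } = 2) := by
  -- key counting facts
  have hub : ∀ n : ℕ, rho 1 S n ≤ Nat.log 2 n + 2 := by
    intro n
    obtain ⟨a, b, hab, hbn, hb⟩ := pd_bounds S hS0 hS1 n
    rw [rho_eq_ncard]
    have hsub : (Set.range fun i => cnt S i n) ⊆ Set.Icc a b := by
      rintro x ⟨i, rfl⟩
      exact ⟨(hb i).1, (hb i).2⟩
    calc (Set.range fun i => cnt S i n).ncard ≤ (Set.Icc a b).ncard :=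
          Set.ncard_le_ncard hsub (Set.finite_Icc a b)
      _ ≤ Nat.log 2 n + 2 := by
          rw [← Finset.coe_Icc, Set.ncard_coe_finset, Nat.card_Icc]
          omega
  have hlb : ∀ n : ℕ, 1 ≤ n → 2 ≤ rho 1 S n := by
    intro n hn
    obtain ⟨i, j, hij⟩ := pd_distinct S hS0 hS1 n hn
    rw [rho_eq_ncard]
    have h1 : 1 < (Set.range fun i => cnt S i n).ncard :=
      (Set.one_lt_ncard_iff (range_cnt_finite S n)).2
        ⟨cnt S i n, cnt S j n, ⟨i, rfl⟩, ⟨j, rfl⟩, hij⟩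
    omega
  have hpow : ∀ k : ℕ, 1 ≤ k → rho 1 S (2 ^ k) = 2 := by
    intro k hk
    obtain ⟨a, ha, hv⟩ := pd_pow2 S hS0 hS1 k
    have hle : rho 1 S (2 ^ k) ≤ 2 := by
      rw [rho_eq_ncard]
      have hsub : (Set.range fun i => cnt S i (2 ^ k)) ⊆ {a, a + 1} := by
        rintro x ⟨i, rfl⟩
        rcases hv i with h | h <;> simp [h]
      calc (Set.range fun i => cnt S i (2 ^ k)).ncard ≤ ({a, a + 1} : Set ℕ).ncard :=
            Set.ncard_le_ncard hsub ((Set.finite_singleton (a + 1)).insert a)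
        _ = 2 := Set.ncard_pair (by omega)
    have hge : 2 ≤ rho 1 S (2 ^ k) := hlb (2 ^ k) (Nat.one_le_two_pow)
    omega
  refine ⟨⟨3 / Real.log 2, ?_⟩, hlb, ?_⟩
  · intro n hn
    have h2 : (0 : ℝ) < Real.log 2 := Real.log_pos (by norm_num)
    have hlog1 : (Nat.log 2 n : ℝ) * Real.log 2 ≤ Real.log (n + 1) := by
      have hp : (2 : ℝ) ^ Nat.log 2 n ≤ (n : ℝ) := by
        have := Nat.pow_log_le_self 2 (show n ≠ 0 by omega)
        exact_mod_cast this
      have : Real.log ((2 : ℝ) ^ Nat.log 2 n) ≤ Real.log (n + 1) := by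
        apply Real.log_le_log (by positivity)
        have : (n : ℝ) ≤ (n : ℝ) + 1 := by linarith
        linarith
      rwa [Real.log_pow] at this
    have hlog2 : Real.log 2 ≤ Real.log (n + 1) := by
      apply Real.log_le_log (by norm_num)
      have : (1 : ℝ) ≤ (n : ℝ) := by exact_mod_cast hn
      linarith
    have hr : (rho 1 S n : ℝ) ≤ (Nat.log 2 n : ℝ) + 2 := by
      have := hub n
      exact_mod_cast this
    rw [div_mul_eq_mul_div, le_div_iff₀ h2]
    calc (rho 1 S n : ℝ) * Real.log 2 ≤ ((Nat.log 2 n : ℝ) + 2) * Real.log 2 := by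
          apply mul_le_mul_of_nonneg_right hr h2.le
      _ = (Nat.log 2 n : ℝ) * Real.log 2 + 2 * Real.log 2 := by ring
      _ ≤ Real.log (n + 1) + 2 * Real.log (n + 1) := by linarith
      _ = 3 * Real.log (n + 1) := by ring
  · intro n hn
    have hmem : 2 ∈ { r : ℕ | ∃ m : ℕ, n ≤ m ∧ r = rho 1 S m } := by
      refine ⟨2 ^ n, (Nat.lt_two_pow_self (n := n)).le, (hpow n hn).symm⟩
    apply le_antisymm
    · exact Nat.sInf_le hmem
    · apply le_csInf ⟨2, hmem⟩
      rintro r ⟨m, hm, rfl⟩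
      exact hlb m (by omega)
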